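/- Let ρ₀ be a pure state (Tr(ρ₀²)=1) and σ a density matrix such that ρ₀ and σ have the same orthogonal projection ϱ onto a subspace of Hermitian matrices (Hilbert–Schmidt inner product). Then d_HS(ρ₀, σ) ≤ 2√(1 − Tr(ϱ²)). -/
import Mathlib


open Matrix ComplexOrder

noncomputable def emb (d : ℕ) (A : Matrix (Fin d) (Fin d) ℂ) :
    EuclideanSpace ℂ (Fin d × Fin d) :=
  (WithLp.equiv 2 _).symm fun p => A p.1 p.2

lemma emb_sub {d : ℕ} (A B : Matrix (Fin d) (Fin d) ℂ) :
    emb d A - emb d B = emb d (A - B) := rfl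

lemma herm_trace_sq {d : ℕ} {A : Matrix (Fin d) (Fin d) ℂ} (hA : A.IsHermitian) :
    (Matrix.trace (A * A)).re = ‖emb d A‖ ^ 2 := by
  rw [EuclideanSpace.norm_eq, Real.sq_sqrt (by positivity)]
  rw [show A * A = Aᴴ * A from by rw [hA]]
  rw [Matrix.trace]
  simp only [Matrix.diag_apply, Matrix.mul_apply, Matrix.conjTranspose_apply,
    Complex.re_sum]
  conv_rhs => rw [Fintype.sum_prod_type]
  rw [Finset.sum_comm]
  apply Finset.sum_congr rfl; intro i _
  apply Finset.sum_congr rfl; intro j _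
  have : emb d A (i, j) = A i j := rfl
  rw [this]
  rw [show star (A i j) * A i j = ((‖A i j‖ : ℂ)) ^ 2 from RCLike.conj_mul (A i j)]
  norm_cast

lemma trace_sq_le_one {d : ℕ} {σ : Matrix (Fin d) (Fin d) ℂ} (hσ : σ.PosSemidef)
    (htσ : σ.trace = 1) : (Matrix.trace (σ * σ)).re ≤ 1 := by
  have hH := hσ.1
  set U : Matrix (Fin d) (Fin d) ℂ := (Matrix.IsHermitian.eigenvectorUnitary hH : Matrix (Fin d) (Fin d) ℂ) with hUdef
  set D : Matrix (Fin d) (Fin d) ℂ := Matrix.diagonal (RCLike.ofReal ∘ hH.eigenvalues) with hDdef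
  have hspec : σ = U * D * star U := hH.spectral_theorem
  have hUU : star U * U = 1 :=
    (Matrix.mem_unitaryGroup_iff'.mp (Matrix.IsHermitian.eigenvectorUnitary hH).2)
  have htD : Matrix.trace (σ * σ) = Matrix.trace (D * D) := by
    rw [hspec]
    simp only [mul_assoc]
    rw [show star U * (U * (D * star U)) = D * star U by rw [← mul_assoc, hUU, one_mul]]
    rw [Matrix.trace_mul_comm]
    simp only [mul_assoc]
    rw [show star U * U = (1 : Matrix (Fin d) (Fin d) ℂ) from hUU, mul_one]
  have htrσ : Matrix.trace σ = Matrix.trace D := by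
    rw [hspec, Matrix.trace_mul_comm]
    rw [← mul_assoc, hUU, one_mul]
  have hsum1 : ∑ i, hH.eigenvalues i = 1 := by
    have : Matrix.trace D = 1 := by rw [← htrσ, htσ]
    rw [hDdef, Matrix.trace_diagonal] at this
    have := congrArg Complex.re this
    simpa [Complex.re_sum] using this
  have htr2 : (Matrix.trace (σ * σ)).re = ∑ i, hH.eigenvalues i ^ 2 := by
    rw [htD, hDdef, Matrix.diagonal_mul_diagonal, Matrix.trace_diagonal]
    simp [Complex.re_sum, sq]
  rw [htr2]
  calc ∑ i, hH.eigenvalues i ^ 2 ≤ (∑ i, hH.eigenvalues i) ^ 2 :=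
        Finset.sum_sq_le_sq_sum_of_nonneg (fun i _ => hσ.eigenvalues_nonneg i)
    _ = 1 := by rw [hsum1]; norm_num

/-- pure target state version of the distance bound:
d_HS(ρ₀,σ) ≤ 2√(1 − Tr ϱ²). -/
theorem stmt1 {d : ℕ} (ρ₀ σ ϱ : Matrix (Fin d) (Fin d) ℂ)
    (V : Submodule ℝ (Matrix (Fin d) (Fin d) ℂ))
    (hVH : ∀ A ∈ V, A.IsHermitian)
    (hρ₀ : ρ₀.PosSemidef) (htρ₀ : ρ₀.trace = 1)
    (hpure : Matrix.trace (ρ₀ * ρ₀) = 1)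
    (hσ : σ.PosSemidef) (htσ : σ.trace = 1)
    (hϱV : ϱ ∈ V)
    (hρ₀proj : ∀ A ∈ V, Matrix.trace ((ρ₀ - ϱ) * A) = 0)
    (hσproj : ∀ A ∈ V, Matrix.trace ((σ - ϱ) * A) = 0) :
    Real.sqrt ((Matrix.trace ((ρ₀ - σ) * (ρ₀ - σ))).re) ≤
      2 * Real.sqrt (1 - (Matrix.trace (ϱ * ϱ)).re) := by
  have hϱH : ϱ.IsHermitian := hVH ϱ hϱV
  have hρH : ρ₀.IsHermitian := hρ₀.1
  have hσH : σ.IsHermitian := hσ.1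
  set t := (Matrix.trace (ϱ * ϱ)).re with ht
  have hρϱ : Matrix.trace (ρ₀ * ϱ) = Matrix.trace (ϱ * ϱ) := by
    have := hρ₀proj ϱ hϱV
    rwa [Matrix.sub_mul, Matrix.trace_sub, sub_eq_zero] at this
  have hσϱ : Matrix.trace (σ * ϱ) = Matrix.trace (ϱ * ϱ) := by
    have := hσproj ϱ hϱV
    rwa [Matrix.sub_mul, Matrix.trace_sub, sub_eq_zero] at this
  have ha : Matrix.trace ((ρ₀ - ϱ) * (ρ₀ - ϱ))
      = Matrix.trace (ρ₀ * ρ₀) - Matrix.trace (ϱ * ϱ) := by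
    simp only [Matrix.sub_mul, Matrix.mul_sub, Matrix.trace_sub]
    rw [Matrix.trace_mul_comm ϱ ρ₀, hρϱ]
    ring
  have hb : Matrix.trace ((σ - ϱ) * (σ - ϱ))
      = Matrix.trace (σ * σ) - Matrix.trace (ϱ * ϱ) := by
    simp only [Matrix.sub_mul, Matrix.mul_sub, Matrix.trace_sub]
    rw [Matrix.trace_mul_comm ϱ σ, hσϱ]
    ring
  have haH : (ρ₀ - ϱ).IsHermitian := hρH.sub hϱH
  have hbH : (σ - ϱ).IsHermitian := hσH.sub hϱH
  have hdH : (ρ₀ - σ).IsHermitian := hρH.sub hσH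
  have h1 : ‖emb d (ρ₀ - ϱ)‖ ^ 2 = 1 - t := by
    rw [← herm_trace_sq haH, ha, Complex.sub_re, hpure, ht, Complex.one_re]
  have h2 : ‖emb d (σ - ϱ)‖ ^ 2 ≤ 1 - t := by
    rw [← herm_trace_sq hbH, hb, Complex.sub_re, ht]
    have := trace_sq_le_one hσ htσ
    linarith
  have key : Real.sqrt ((Matrix.trace ((ρ₀ - σ) * (ρ₀ - σ))).re) = ‖emb d (ρ₀ - σ)‖ := by
    rw [herm_trace_sq hdH, Real.sqrt_sq (norm_nonneg _)]
  rw [key]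
  have tri : ‖emb d (ρ₀ - σ)‖ ≤ ‖emb d (ρ₀ - ϱ)‖ + ‖emb d (σ - ϱ)‖ := by
    have heq : emb d (ρ₀ - σ) = emb d (ρ₀ - ϱ) - emb d (σ - ϱ) := by
      rw [emb_sub]
      congr 1
      abel
    rw [heq]
    exact norm_sub_le _ _
  have hnn : (0 : ℝ) ≤ 1 - t := by
    rw [← h1]; positivity
  have e1 : ‖emb d (ρ₀ - ϱ)‖ = Real.sqrt (1 - t) := by
    rw [← h1, Real.sqrt_sq (norm_nonneg _)]
  have e2 : ‖emb d (σ - ϱ)‖ ≤ Real.sqrt (1 - t) := by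
    rw [← Real.sqrt_sq (norm_nonneg (emb d (σ - ϱ)))]
    exact Real.sqrt_le_sqrt h2
  calc ‖emb d (ρ₀ - σ)‖ ≤ ‖emb d (ρ₀ - ϱ)‖ + ‖emb d (σ - ϱ)‖ := tri
    _ ≤ Real.sqrt (1 - t) + Real.sqrt (1 - t) := by rw [e1]; exact add_le_add le_rfl e2
    _ = 2 * Real.sqrt (1 - t) := by ring
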